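/- Let d be an odd integer ≥ 3, m ≥ 2, ω = exp(2πi/d), and define α_n, β_n for n = 0,…,(d-1)/2 - 1 by α_n = (1/(2d)) tan(π/(2m)) [g_m(n) - g_m((d-1)/2)] and β_n = (1/(2d)) tan(π/(2m)) [g_m(n+1-1/m) + g_m((d-1)/2)], where g_m(x) = cot(π(x+1/(2m))/d). Then for every integer k with 1 ≤ k ≤ (d-1)/2, Σ_{n=0}^{(d-1)/2-1} (α_n ω^{-kn} - β_n ω^{k(n+1)}) = exp(πi(2k-d)/(2md)) / (2cos(π/(2m))). -/

import Mathlib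

open Complex Finset

noncomputable def Ee (d : ℕ) (x : ℝ) : ℂ := Complex.exp (Real.pi * Complex.I * ((x / d : ℝ) : ℂ))

lemma Ee_add (d : ℕ) (x y : ℝ) : Ee d (x + y) = Ee d x * Ee d y := by
  rw [Ee, Ee, Ee, ← Complex.exp_add, add_div]; push_cast; ring_nf

lemma Ee_ne_zero (d : ℕ) (x : ℝ) : Ee d x ≠ 0 := Complex.exp_ne_zero _

lemma Ee_zero (d : ℕ) : Ee d 0 = 1 := by simp [Ee]

lemma Ee_pow (d : ℕ) (x : ℝ) (n : ℕ) : Ee d x ^ n = Ee d (n * x) := by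
  rw [Ee, Ee, ← Complex.exp_nat_mul]; congr 1; push_cast; ring

lemma Ee_neg (d : ℕ) (x : ℝ) : Ee d (-x) = (Ee d x)⁻¹ := by
  rw [Ee, Ee, ← Complex.exp_neg]; congr 1; push_cast; ring

lemma Ee_int (d : ℕ) (hd : 0 < d) (n : ℤ) : Ee d (2 * d * n) = 1 := by
  have hdR : (d : ℝ) ≠ 0 := Nat.cast_ne_zero.mpr hd.ne'
  rw [Ee, show ((2 * d * n : ℝ) / d : ℝ) = 2 * n by field_simp]
  push_cast
  rw [show (Real.pi : ℂ) * Complex.I * (2 * n) = n * (2 * Real.pi * Complex.I) by ring,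
    Complex.exp_int_mul_two_pi_mul_I]

lemma Ee_eq_one (d : ℕ) (hd : 0 < d) {t : ℝ} (h : Ee d t = 1) : ∃ n : ℤ, t = 2 * d * n := by
  rw [Ee, Complex.exp_eq_one_iff] at h
  obtain ⟨n, hn⟩ := h
  refine ⟨n, ?_⟩
  have hπ : (Real.pi : ℂ) * Complex.I ≠ 0 := by
    simp [Real.pi_ne_zero, Complex.I_ne_zero]
  have h2 : ((t / d : ℝ) : ℂ) = ((2 * n : ℝ) : ℂ) := by
    apply mul_left_cancel₀ hπ
    rw [hn]; push_cast; ring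
  have h3 : t / d = 2 * n := Complex.ofReal_inj.mp h2
  have hdR : (d : ℝ) ≠ 0 := Nat.cast_ne_zero.mpr hd.ne'
  field_simp at h3
  linarith [h3]

lemma Ee_ne_one (d : ℕ) (hd : 0 < d) {t : ℝ} (h0 : t ≠ 0) (h1 : -(2 * d) < t)
    (h2 : t < 2 * d) : Ee d t ≠ 1 := by
  intro h
  obtain ⟨n, hn⟩ := Ee_eq_one d hd h
  have hn0 : n ≠ 0 := by rintro rfl; simp at hn; exact h0 hn
  have habs : (1 : ℝ) ≤ |(n : ℝ)| := by
    rw [← Int.cast_abs]; exact_mod_cast Int.one_le_abs (by omega)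
  have hdpos : (0 : ℝ) < d := Nat.cast_pos.mpr hd
  have habs2 : 2 * (d : ℝ) ≤ |t| := by
    rw [hn, abs_mul, abs_mul]
    rw [abs_of_pos (show (0:ℝ)<2 by norm_num), abs_of_pos hdpos]
    nlinarith [mul_le_mul_of_nonneg_left habs (by positivity : (0:ℝ) ≤ 2*(d:ℝ))]
  rcases abs_cases t with ⟨he, _⟩ | ⟨he, _⟩ <;> nlinarith

lemma orth (d : ℕ) (hd : 0 < d) (r : ℤ) (hr : Ee d (2 * r) ≠ 1) :
    ∑ n ∈ Finset.range d, Ee d (2 * r * n) = 0 := by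
  have h1 : ∀ n : ℕ, Ee d (2 * r * n) = Ee d (2 * r) ^ n := fun n => by
    rw [Ee_pow]; congr 1; ring
  simp_rw [h1]
  rw [geom_sum_eq hr, Ee_pow, show ((d : ℝ) * (2 * r)) = 2 * d * r by ring,
    Ee_int d hd, sub_self, zero_div]
open Complex Finset

lemma cot_exp (t : ℝ) (h : Complex.exp (2 * t * Complex.I) ≠ 1) :
    ((Real.cot t : ℝ) : ℂ) =
      Complex.I * (Complex.exp (2 * t * Complex.I) + 1) / (Complex.exp (2 * t * Complex.I) - 1) := by
  have hs : Real.sin t ≠ 0 := by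
    intro h0
    obtain ⟨n, hn⟩ := Real.sin_eq_zero_iff.mp h0
    apply h
    rw [← hn]; push_cast
    rw [show 2 * ((n : ℂ) * Real.pi) * Complex.I = n * (2 * Real.pi * Complex.I) by ring,
      Complex.exp_int_mul_two_pi_mul_I]
  have hsC : Complex.sin t ≠ 0 := by
    rw [← Complex.ofReal_sin]; exact_mod_cast hs
  rw [Real.cot_eq_cos_div_sin]
  push_cast
  rw [← Complex.ofReal_cos, ← Complex.ofReal_sin, Complex.ofReal_cos, Complex.ofReal_sin]
  have hE : Complex.exp ((t : ℂ) * Complex.I) ≠ 0 := Complex.exp_ne_zero _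
  have h2 : Complex.exp (2 * (t : ℂ) * Complex.I) =
      Complex.exp ((t:ℂ) * Complex.I) * Complex.exp ((t:ℂ) * Complex.I) := by
    rw [← Complex.exp_add]; ring_nf
  have hden : Complex.exp (2 * (t:ℂ) * Complex.I) - 1 ≠ 0 := sub_ne_zero.mpr h
  have hsin : Complex.sin (t : ℂ) =
      (Complex.exp (-(t:ℂ) * Complex.I) - Complex.exp ((t:ℂ) * Complex.I)) * Complex.I / 2 := rfl
  have hcos : Complex.cos (t : ℂ) =
      (Complex.exp ((t:ℂ) * Complex.I) + Complex.exp (-(t:ℂ) * Complex.I)) / 2 := rfl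
  have hneg : Complex.exp (-(t:ℂ) * Complex.I) = (Complex.exp ((t:ℂ) * Complex.I))⁻¹ := by
    rw [← Complex.exp_neg]; ring_nf
  rw [div_eq_div_iff hsC hden, hsin, hcos, h2, hneg] at *
  field_simp
  linear_combination (Complex.exp ((t:ℂ)*Complex.I) * Complex.exp ((t:ℂ)*Complex.I) + 1) *
    (Complex.exp ((t:ℂ)*Complex.I) * Complex.exp ((t:ℂ)*Complex.I) - 1) * Complex.I_mul_I
lemma Ee_geom (d : ℕ) (hd : 0 < d) (r : ℝ) (hne : Ee d (2 * r) ≠ 1)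
    (hint : Ee d ((d : ℝ) * (2 * r)) = 1) :
    ∑ n ∈ Finset.range d, Ee d (2 * r) ^ n = 0 := by
  rw [geom_sum_eq hne, Ee_pow, hint, sub_self, zero_div]

lemma keysum (d k : ℕ) (hd : 0 < d) (hk : 0 < k) (hkd : k < d) (μ : ℝ)
    (hμ1 : 0 < μ) (hμ2 : μ ≤ 1 / 2) :
    ∑ n ∈ Finset.range d, Complex.I * (Ee d (2 * n + μ) + 1) / (Ee d (2 * n + μ) - 1)
        * Ee d (-(2 * k * n))
      = 2 * d * Complex.I * Ee d ((k : ℝ) * μ) / (Ee d (d * μ) - 1) := by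
  have hdR : (1 : ℝ) ≤ d := by exact_mod_cast hd
  have hkR : (1 : ℝ) ≤ k := by exact_mod_cast hk
  have hkdR : (k : ℝ) < d := by exact_mod_cast hkd
  have hμD : Ee d ((d : ℝ) * μ) ≠ 1 := by
    apply Ee_ne_one d hd (by positivity) (by nlinarith) (by nlinarith)
  have hD : Ee d ((d : ℝ) * μ) - 1 ≠ 0 := sub_ne_zero.mpr hμD
  have step1 : ∀ n ∈ Finset.range d,
      Complex.I * (Ee d (2 * n + μ) + 1) / (Ee d (2 * n + μ) - 1) * Ee d (-(2 * k * n))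
        = Complex.I * Ee d (-(2 * k * n))
          + (2 * Complex.I / (Ee d ((d : ℝ) * μ) - 1)) * ∑ j ∈ Finset.range d,
              Ee d (-(2 * k * n)) * Ee d (j * (2 * n + μ)) := by
    intro n hn
    rw [Finset.mem_range] at hn
    have hnd : (n : ℝ) ≤ d - 1 := by
      have : (n : ℝ) + 1 ≤ d := by exact_mod_cast hn
      linarith
    have hw1 : Ee d (2 * n + μ) ≠ 1 := by
      apply Ee_ne_one d hd (by positivity) (by nlinarith) (by nlinarith)
    have hw0 : Ee d (2 * n + μ) - 1 ≠ 0 := sub_ne_zero.mpr hw1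
    have hpow : ∀ j : ℕ, Ee d (2 * n + μ) ^ j = Ee d (j * (2 * n + μ)) := fun j => Ee_pow _ _ _
    have hgeom : (∑ j ∈ Finset.range d, Ee d (j * (2 * n + μ))) * (Ee d (2 * n + μ) - 1)
        = Ee d ((d : ℝ) * μ) - 1 := by
      simp_rw [← hpow]
      rw [geom_sum_mul, hpow]
      congr 1
      rw [show (d : ℝ) * (2 * n + μ) = 2 * d * ((n : ℤ) : ℝ) + d * μ by push_cast; ring,
        Ee_add, Ee_int d hd, one_mul]
    rw [← Finset.mul_sum, mul_comm (Ee d (-(2 * (k:ℝ) * n)))]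
    have hS : ∑ j ∈ Finset.range d, Ee d (j * (2 * n + μ))
        = (Ee d ((d : ℝ) * μ) - 1) / (Ee d (2 * n + μ) - 1) := by
      rw [eq_div_iff hw0]; exact hgeom
    rw [hS]
    generalize Ee d ((d : ℝ) * μ) - 1 = D at hD ⊢
    generalize Ee d (2 * n + μ) = w at hw0 ⊢
    field_simp
    ring
  rw [Finset.sum_congr rfl step1, Finset.sum_add_distrib]
  have first : ∑ n ∈ Finset.range d, Complex.I * Ee d (-(2 * k * n)) = 0 := by
    have pw : ∀ n ∈ Finset.range d, Complex.I * Ee d (-(2 * k * n))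
        = Complex.I * Ee d (2 * (-(k : ℝ))) ^ n := by
      intro n _
      rw [Ee_pow]
      congr 1
      push_cast
      ring
    rw [Finset.sum_congr rfl pw, ← Finset.mul_sum,
      Ee_geom d hd (-(k:ℝ)) ?_ ?_, mul_zero]
    · apply Ee_ne_one d hd (by nlinarith) (by nlinarith) (by nlinarith)
    · rw [show (d : ℝ) * (2 * -(k:ℝ)) = 2 * d * (Int.cast (-(k:ℤ)) : ℝ) by push_cast; ring, Ee_int d hd]
  rw [first, zero_add, ← Finset.mul_sum]
  have inner : ∀ n j : ℕ, Ee d (-(2 * (k:ℝ) * n)) * Ee d ((j:ℝ) * (2 * n + μ))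
      = Ee d ((j : ℝ) * μ) * Ee d (2 * ((j:ℝ) - k)) ^ n := by
    intro n j
    rw [Ee_pow, ← Ee_add, ← Ee_add]
    congr 1
    push_cast
    ring
  have swap : ∑ n ∈ Finset.range d, ∑ j ∈ Finset.range d,
      Ee d (-(2 * k * n)) * Ee d (j * (2 * n + μ)) = d * Ee d ((k : ℝ) * μ) := by
    simp only [inner]
    rw [Finset.sum_comm]
    have second : ∀ j ∈ Finset.range d, j ≠ k →
        ∑ n ∈ Finset.range d, Ee d ((j : ℝ) * μ) * Ee d (2 * ((j:ℝ) - k)) ^ n = 0 := by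
      intro j hj hjk
      rw [Finset.mem_range] at hj
      have hjR : (j : ℝ) < d := by exact_mod_cast hj
      have hjR0 : (0 : ℝ) ≤ j := by positivity
      have hjk' : (j : ℝ) ≠ (k : ℝ) := by exact_mod_cast fun hc => hjk (Nat.cast_injective hc)
      rw [← Finset.mul_sum, Ee_geom d hd ((j:ℝ) - k) ?_ ?_, mul_zero]
      · apply Ee_ne_one d hd
        · intro hcon
          apply hjk'
          linarith
        · nlinarith
        · nlinarith
      · rw [show (d : ℝ) * (2 * ((j:ℝ) - k)) = 2 * d * (Int.cast ((j:ℤ) - k) : ℝ) by push_cast; ring,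
          Ee_int d hd]
    rw [Finset.sum_eq_single_of_mem k (Finset.mem_range.mpr hkd) second]
    rw [show (2 * ((k:ℝ) - k)) = 0 by ring, Ee_zero]
    simp
  rw [swap]
  field_simp

set_option maxHeartbeats 1600000 in
theorem stmt2 (d m : ℕ) (hd : 3 ≤ d) (hodd : d % 2 = 1) (hm : 2 ≤ m)
    (g : ℝ → ℝ) (hg : ∀ x : ℝ, g x = Real.cot (Real.pi * (x + 1 / (2 * m)) / d))
    (α β : ℕ → ℝ)
    (hα : ∀ n : ℕ, α n = 1 / (2 * d) * Real.tan (Real.pi / (2 * m))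
      * (g n - g (((d - 1) / 2 : ℕ) : ℝ)))
    (hβ : ∀ n : ℕ, β n = 1 / (2 * d) * Real.tan (Real.pi / (2 * m))
      * (g ((n : ℝ) + 1 - 1 / m) + g (((d - 1) / 2 : ℕ) : ℝ)))
    (k : ℕ) (hk1 : 1 ≤ k) (hk2 : k ≤ (d - 1) / 2) :
    ∑ n ∈ Finset.range ((d - 1) / 2),
        ((α n : ℂ) * Complex.exp (2 * Real.pi * Complex.I * (-((k : ℝ) * n)) / d)
          - (β n : ℂ) * Complex.exp (2 * Real.pi * Complex.I * ((k : ℝ) * ((n : ℝ) + 1)) / d))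
      = Complex.exp (Real.pi * Complex.I * ((2 * (k : ℝ) - d) / (2 * m * d)))
          / (2 * Real.cos (Real.pi / (2 * m))) := by
  set N := (d - 1) / 2 with hNdef
  have hdN : d = 2 * N + 1 := by omega
  have hN1 : 1 ≤ N := by omega
  have hd0 : 0 < d := by omega
  have hkN : k ≤ N := hk2
  have hkd : k < d := by omega
  have hdR : (3 : ℝ) ≤ d := by exact_mod_cast hd
  have hdNR : (d : ℝ) = 2 * N + 1 := by exact_mod_cast hdN
  have hmR : (2 : ℝ) ≤ m := by exact_mod_cast hm
  have hm0 : (m : ℝ) ≠ 0 := by positivity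
  have hd0R : (d : ℝ) ≠ 0 := by positivity
  have hkR : (1 : ℝ) ≤ k := by exact_mod_cast hk1
  have hkNR : (k : ℝ) ≤ N := by exact_mod_cast hkN
  set μ : ℝ := 1 / m with hμdef
  have hμ1 : 0 < μ := by positivity
  have hμ2 : μ ≤ 1 / 2 := by
    rw [hμdef]
    rw [div_le_div_iff₀ (by linarith) (by norm_num)]
    linarith
  set θ : ℝ := Real.pi / (2 * m) with hθdef
  have hπ := Real.pi_pos
  have hθ1 : 0 < θ := by positivity
  have hθ2 : θ < Real.pi / 2 := by
    rw [hθdef, div_lt_div_iff₀ (by linarith) (by norm_num)]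
    nlinarith
  have hcos : 0 < Real.cos θ := Real.cos_pos_of_mem_Ioo ⟨by linarith, hθ2⟩
  have hsin : 0 < Real.sin θ := Real.sin_pos_of_pos_of_lt_pi hθ1 (by linarith)
  -- the complex summand building blocks
  set f : ℕ → ℂ := fun n =>
    Complex.I * (Ee d (2 * n + μ) + 1) / (Ee d (2 * n + μ) - 1) * Ee d (-(2 * k * n)) with hfdef
  set c : ℝ := 1 / (2 * d) * Real.tan θ with hcdef
  -- cast of g at integer points
  have hgF : ∀ n : ℕ, n ≤ N → ((g n : ℝ) : ℂ)
      = Complex.I * (Ee d (2 * n + μ) + 1) / (Ee d (2 * n + μ) - 1) := by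
    intro n hn
    have hnR : (n : ℝ) ≤ N := by exact_mod_cast hn
    have hb1 : (0 : ℝ) < 2 * n + μ := by positivity
    have hb2 : 2 * (n : ℝ) + μ < 2 * d := by nlinarith
    have hne : Ee d (2 * n + μ) ≠ 1 := Ee_ne_one d hd0 (by positivity) (by linarith) hb2
    have harg : Complex.exp (2 * ((Real.pi * ((n : ℝ) + 1 / (2 * m)) / d : ℝ) : ℂ) * Complex.I)
        = Ee d (2 * n + μ) := by
      rw [Ee]
      congr 1
      rw [hμdef]
      push_cast
      field_simp
    rw [hg, cot_exp _ (by rw [harg]; exact hne), harg]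
  have hgF' : ∀ n : ℕ, n < N → (-(g ((n : ℝ) + 1 - 1 / m) : ℂ)) * Ee d (2 * k * (n + 1))
      = f (2 * N - n) := by
    intro n hn
    have hnR : (n : ℝ) ≤ N - 1 := by
      have : (n : ℝ) + 1 ≤ N := by exact_mod_cast hn
      linarith
    have hb1 : (0 : ℝ) < 2 * (n + 1) - μ := by nlinarith
    have hb2 : 2 * ((n : ℝ) + 1) - μ < 2 * d := by nlinarith
    have hvne : Ee d (2 * ((n : ℝ) + 1) - μ) ≠ 1 :=
      Ee_ne_one d hd0 (by nlinarith) (by nlinarith) hb2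
    have hv0 : Ee d (2 * ((n : ℝ) + 1) - μ) ≠ 0 := Ee_ne_zero _ _
    -- g value
    have harg : Complex.exp (2 * ((Real.pi * (((n : ℝ) + 1 - 1 / m) + 1 / (2 * m)) / d : ℝ) : ℂ)
        * Complex.I) = Ee d (2 * ((n : ℝ) + 1) - μ) := by
      rw [Ee]
      congr 1
      rw [hμdef]
      push_cast
      field_simp
      push_cast
      ring
    have hgv : ((g ((n : ℝ) + 1 - 1 / m) : ℝ) : ℂ)
        = Complex.I * (Ee d (2 * ((n : ℝ) + 1) - μ) + 1) / (Ee d (2 * ((n : ℝ) + 1) - μ) - 1) := by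
      rw [hg, cot_exp _ (by rw [harg]; exact hvne), harg]
    -- f at reflected index
    have hidx : (((2 * N - n : ℕ)) : ℝ) = 2 * N - n := by
      have : n ≤ 2 * N := by omega
      push_cast [this]
      ring
    have hw : Ee d (2 * ((2 * N - n : ℕ) : ℝ) + μ) = (Ee d (2 * ((n : ℝ) + 1) - μ))⁻¹ := by
      have h1 : Ee d ((2 * ((2 * N - n : ℕ) : ℝ) + μ) + 2 * d * ((-1 : ℤ) : ℝ))
          = Ee d (2 * ((2 * N - n : ℕ) : ℝ) + μ) := by
        rw [Ee_add, Ee_int d hd0, mul_one]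
      rw [← h1, ← Ee_neg]
      congr 1
      rw [hidx]
      push_cast
      rw [hdNR]
      ring
    have hx : Ee d (-(2 * (k : ℝ) * ((2 * N - n : ℕ) : ℝ))) = Ee d (2 * k * (n + 1)) := by
      have h1 : Ee d ((2 * (k : ℝ) * ((n : ℝ) + 1)) + 2 * d * (((-(k : ℤ)) : ℤ) : ℝ))
          = Ee d (2 * (k : ℝ) * ((n : ℝ) + 1)) := by
        rw [Ee_add, Ee_int d hd0, mul_one]
      rw [← h1]
      congr 1
      rw [hidx]
      push_cast
      rw [hdNR]
      ring
    simp only [hfdef]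
    rw [hw, hx, hgv]
    set v := Ee d (2 * ((n : ℝ) + 1) - μ)
    have hv1 : v - 1 ≠ 0 := sub_ne_zero.mpr hvne
    have hvinv : v⁻¹ - 1 ≠ 0 := by
      rw [sub_ne_zero]
      intro hcon
      apply hvne
      rw [← inv_inv v, hcon, inv_one]
    have h1v : (1 : ℂ) - v ≠ 0 := fun hcon => hvne (by linear_combination -hcon)
    field_simp [h1v]
    push_cast
    ring
  -- split of a sum over range d
  have hsplit : ∀ h : ℕ → ℂ, ∑ i ∈ Finset.range d, h i
      = ∑ n ∈ Finset.range N, h n + h N + ∑ n ∈ Finset.range N, h (2 * N - n) := by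
    intro h
    rw [hdN, show 2 * N + 1 = (N + 1) + N by ring, Finset.sum_range_add, Finset.sum_range_succ]
    congr 1
    rw [← Finset.sum_range_reflect (fun j => h (N + 1 + j)) N]
    apply Finset.sum_congr rfl
    intro j hj
    rw [Finset.mem_range] at hj
    congr 1
    omega
  -- geometric fact
  have hxgeom : ∑ n ∈ Finset.range N, Ee d (-(2 * k * n))
      + ∑ n ∈ Finset.range N, Ee d (2 * k * (n + 1)) = -Ee d (-(2 * k * N)) := by
    have hne : Ee d (2 * (-(k : ℝ))) ≠ 1 :=
      Ee_ne_one d hd0 (by nlinarith) (by push_cast; nlinarith) (by push_cast; nlinarith)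
    have hgeo : ∑ i ∈ Finset.range d, Ee d (2 * (-(k : ℝ))) ^ i = 0 := by
      apply Ee_geom d hd0 _ hne
      rw [show (d : ℝ) * (2 * -(k : ℝ)) = 2 * d * ((-(k : ℤ)) : ℤ) by push_cast; ring, Ee_int d hd0]
    have hpowx : ∀ i : ℕ, Ee d (2 * (-(k : ℝ))) ^ i = Ee d (-(2 * k * i)) := by
      intro i
      rw [Ee_pow]
      congr 1
      push_cast
      ring
    rw [hsplit (fun i => Ee d (2 * (-(k : ℝ))) ^ i)] at hgeo
    simp only [hpowx] at hgeo
    have hrefl : ∀ n ∈ Finset.range N, Ee d (-(2 * (k : ℝ) * ((2 * N - n : ℕ) : ℝ)))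
        = Ee d (2 * k * (n + 1)) := by
      intro n hn
      rw [Finset.mem_range] at hn
      have hidx : (((2 * N - n : ℕ)) : ℝ) = 2 * N - n := by
        have : n ≤ 2 * N := by omega
        push_cast [this]
        ring
      rw [show -(2 * (k : ℝ) * ((2 * N - n : ℕ) : ℝ)) = 2 * (k : ℝ) * ((n : ℝ) + 1)
          + 2 * d * ((-(k : ℤ)) : ℤ) by rw [hidx]; push_cast; rw [hdNR]; ring]
      rw [Ee_add, Ee_int d hd0, mul_one]
    rw [Finset.sum_congr rfl hrefl] at hgeo
    linear_combination hgeo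
  -- rewrite each summand of the LHS
  have hsummand : ∀ n ∈ Finset.range N,
      (α n : ℂ) * Complex.exp (2 * Real.pi * Complex.I * (-((k : ℝ) * n)) / d)
        - (β n : ℂ) * Complex.exp (2 * Real.pi * Complex.I * ((k : ℝ) * ((n : ℝ) + 1)) / d)
      = (c : ℂ) * (f n + f (2 * N - n))
        - (c : ℂ) * ((g (N : ℝ) : ℝ) : ℂ) * (Ee d (-(2 * k * n)) + Ee d (2 * k * (n + 1))) := by
    intro n hn
    rw [Finset.mem_range] at hn
    have hexp1 : Complex.exp (2 * Real.pi * Complex.I * (-((k : ℝ) * n)) / d)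
        = Ee d (-(2 * k * n)) := by
      rw [Ee]; congr 1; push_cast; field_simp
    have hexp2 : Complex.exp (2 * Real.pi * Complex.I * ((k : ℝ) * ((n : ℝ) + 1)) / d)
        = Ee d (2 * k * (n + 1)) := by
      rw [Ee]; congr 1; push_cast; field_simp
    have hfn : f n = ((g n : ℝ) : ℂ) * Ee d (-(2 * k * n)) := by
      simp only [hfdef]
      rw [hgF n (le_of_lt hn)]
    rw [hexp1, hexp2, hα, hβ]
    push_cast
    rw [hfn, ← hgF' n hn, hgF n (le_of_lt hn)]
    ring
  rw [Finset.sum_congr rfl hsummand]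
  rw [Finset.sum_sub_distrib, ← Finset.mul_sum, ← Finset.mul_sum, Finset.sum_add_distrib,
    Finset.sum_add_distrib, hxgeom]
  have hfN : f N = ((g (N : ℝ) : ℝ) : ℂ) * Ee d (-(2 * k * N)) := by
    simp only [hfdef]
    rw [hgF N le_rfl]
  have htotal : ∑ n ∈ Finset.range d, f n
      = ∑ n ∈ Finset.range N, f n + f N + ∑ n ∈ Finset.range N, f (2 * N - n) := hsplit f
  have hkey := keysum d k hd0 (by omega) hkd μ hμ1 hμ2
  have hEq : ((c : ℝ) : ℂ) * ∑ n ∈ Finset.range d, f n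
      = (c : ℂ) * (∑ n ∈ Finset.range N, f n + ∑ n ∈ Finset.range N, f (2 * N - n))
        - (c : ℂ) * ((g (N : ℝ) : ℝ) : ℂ) * -Ee d (-(2 * k * N)) := by
    rw [htotal, hfN]
    ring
  rw [← hEq]
  simp only [hfdef]
  rw [hkey]
  -- final algebra
  have hEd : Ee d ((d : ℝ) * μ) - 1 = Complex.exp (θ * Complex.I) * (2 * Complex.I * (Real.sin θ : ℂ)) := by
    have h1 : Ee d ((d : ℝ) * μ) = Complex.exp ((θ : ℂ) * Complex.I) * Complex.exp ((θ : ℂ) * Complex.I) := by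
      rw [Ee, ← Complex.exp_add]
      congr 1
      rw [hμdef, hθdef]
      push_cast
      field_simp [show (d:ℂ) ≠ 0 by exact_mod_cast hd0R, show (m:ℂ) ≠ 0 by exact_mod_cast hm0]
      ring
    rw [h1]
    have hsinC : ((Real.sin θ : ℝ) : ℂ) = Complex.sin (θ : ℂ) := Complex.ofReal_sin θ
    rw [hsinC]
    have hsdef : Complex.sin (θ : ℂ)
        = (Complex.exp (-(θ:ℂ) * Complex.I) - Complex.exp ((θ:ℂ) * Complex.I)) * Complex.I / 2 := rfl
    have hneg : Complex.exp (-(θ:ℂ) * Complex.I) = (Complex.exp ((θ:ℂ) * Complex.I))⁻¹ := by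
      rw [← Complex.exp_neg]; ring_nf
    have hE0 : Complex.exp ((θ:ℂ) * Complex.I) ≠ 0 := Complex.exp_ne_zero _
    rw [hsdef, hneg]
    field_simp
    linear_combination (Complex.exp ((θ:ℂ) * Complex.I)^2 - 1) * Complex.I_mul_I
  have hRHS : Complex.exp (Real.pi * Complex.I * ((2 * (k : ℝ) - d) / (2 * m * d)))
      = Ee d ((k : ℝ) * μ) * Complex.exp (-(θ : ℂ) * Complex.I) := by
    rw [Ee, ← Complex.exp_add]
    congr 1
    rw [hμdef, hθdef]
    push_cast
    field_simp [show (d:ℂ) ≠ 0 by exact_mod_cast hd0R, show (m:ℂ) ≠ 0 by exact_mod_cast hm0]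
    ring
  rw [hEd, hRHS, hcdef, Real.tan_eq_sin_div_cos]
  have hE0 : Complex.exp ((θ:ℂ) * Complex.I) ≠ 0 := Complex.exp_ne_zero _
  have hneg : Complex.exp (-(θ:ℂ) * Complex.I) = (Complex.exp ((θ:ℂ) * Complex.I))⁻¹ := by
    rw [← Complex.exp_neg]; ring_nf
  rw [hneg]
  have hsin0 : (Real.sin θ : ℂ) ≠ 0 := by exact_mod_cast hsin.ne'
  have hcos0 : (Real.cos θ : ℂ) ≠ 0 := by exact_mod_cast hcos.ne'
  have hd0C : (d : ℂ) ≠ 0 := by exact_mod_cast hd0R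
  push_cast
  have hsinC : Complex.sin (θ:ℂ) ≠ 0 := by
    rw [← Complex.ofReal_sin]; exact_mod_cast hsin.ne'
  have hcosC : Complex.cos (θ:ℂ) ≠ 0 := by
    rw [← Complex.ofReal_cos]; exact_mod_cast hcos.ne'
  field_simp [hsinC, hcosC, hd0C, Complex.exp_ne_zero, Complex.I_ne_zero]
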